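/- Let α : ℕ → ℝ satisfy α(n) → +∞ and α(n) = o(log n), and let p(n) = (log n + α(n))/n. Then with high probability, for every pair of disjoint vertex subsets U, W of the Erdős–Rényi random graph G(n, p(n)) with |U| ≥ n/(log log n) and |W| ≥ n/(log log n), there is at least one edge with one endpoint in U and the other in W; that is, the probability of this event tends to 1 as n tends to infinity. -/

import Mathlib

open Classical in
/-- The probability that the Erdős–Rényi random graph `G(n,p)` lies in the event `A`:
each graph `G` on `Fin n` has probability `p^(#edges of G) * (1-p)^((n choose 2) - #edges of G)`. -/
noncomputable def erProb (n : ℕ) (p : ℝ) (A : Set (SimpleGraph (Fin n))) : ℝ :=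
  ∑ G : SimpleGraph (Fin n),
    if G ∈ A then p ^ G.edgeSet.ncard * (1 - p) ^ (n.choose 2 - G.edgeSet.ncard) else 0

section Helpers
open Filter Real
open Finset SimpleGraph Classical in
noncomputable def edgeSlots (n : ℕ) : Finset (Sym2 (Fin n)) :=
  Finset.univ.filter (fun e => ¬ e.IsDiag)

open Finset SimpleGraph Classical in
lemma sum_graphs_eq (n : ℕ) (g : SimpleGraph (Fin n) → ℝ) :
    ∑ G : SimpleGraph (Fin n), g G
      = ∑ s ∈ (edgeSlots n).powerset, g (SimpleGraph.fromEdgeSet ↑s) := by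
  refine Finset.sum_nbij' (i := fun G => G.edgeFinset)
    (j := fun s => SimpleGraph.fromEdgeSet ↑s) ?_ ?_ ?_ ?_ ?_
  · intro G _
    simp only [edgeSlots, Finset.mem_powerset, Finset.subset_iff, Finset.mem_filter,
      Finset.mem_univ, true_and]
    intro e he
    exact G.not_isDiag_of_mem_edgeSet (SimpleGraph.mem_edgeFinset.1 he)
  · intro s _; exact Finset.mem_univ _
  · intro G _
    simp [SimpleGraph.coe_edgeFinset, SimpleGraph.fromEdgeSet_edgeSet]
  · intro s hs
    simp only [edgeSlots, Finset.mem_powerset] at hs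
    ext e
    simp only [SimpleGraph.mem_edgeFinset, SimpleGraph.edgeSet_fromEdgeSet,
      Set.mem_diff, Finset.mem_coe, Set.mem_setOf_eq]
    constructor
    · exact fun h => h.1
    · intro he
      exact ⟨he, by have := hs he; simpa [Finset.mem_filter] using this⟩
  · intro G _; simp [SimpleGraph.coe_edgeFinset, SimpleGraph.fromEdgeSet_edgeSet]

open Finset SimpleGraph Classical in
lemma edgeSlots_card (n : ℕ) : (edgeSlots n).card = n.choose 2 := by
  have h := Sym2.card_subtype_not_diag (α := Fin n)
  rw [Fintype.card_subtype] at h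
  simpa [edgeSlots] using h

open Finset SimpleGraph Classical in
lemma fromEdgeSet_ncard {n : ℕ} {s : Finset (Sym2 (Fin n))} (hs : s ∈ (edgeSlots n).powerset) :
    (SimpleGraph.fromEdgeSet (↑s : Set (Sym2 (Fin n)))).edgeSet.ncard = s.card := by
  rw [SimpleGraph.edgeSet_fromEdgeSet]
  have : (↑s : Set (Sym2 (Fin n))) \ {e | e.IsDiag} = ↑s := by
    ext e
    simp only [Set.mem_diff, Set.mem_setOf_eq, Finset.mem_coe, and_iff_left_iff_imp]
    intro he
    have := (Finset.mem_powerset.1 hs) he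
    simpa [edgeSlots] using this
  rw [Sym2.diagSet_eq_setOfPred_isDiag, this, Set.ncard_coe_finset]

open Finset SimpleGraph Classical in
lemma erProb_eq (n : ℕ) (p : ℝ) (A : Set (SimpleGraph (Fin n))) :
    erProb n p A = ∑ s ∈ (edgeSlots n).powerset,
      (if SimpleGraph.fromEdgeSet ↑s ∈ A then p ^ s.card * (1-p) ^ (n.choose 2 - s.card) else 0) := by
  rw [erProb, sum_graphs_eq n (fun G => if G ∈ A then p ^ G.edgeSet.ncard * (1 - p) ^ (n.choose 2 - G.edgeSet.ncard) else 0)]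
  exact Finset.sum_congr rfl fun s hs => by rw [fromEdgeSet_ncard hs]

open Finset in
lemma sum_powerset_weight {ι : Type*} [DecidableEq ι] (T : Finset ι) (p q : ℝ) :
    ∑ s ∈ T.powerset, p ^ s.card * q ^ (T.card - s.card) = (p + q) ^ T.card := by
  have h := Finset.prod_add (fun _ : ι => p) (fun _ : ι => q) T
  simp only [Finset.prod_const] at h
  rw [h]
  exact Finset.sum_congr rfl fun s hs => by
    rw [Finset.card_sdiff_of_subset (Finset.mem_powerset.1 hs)]

open Finset in
lemma sum_powerset_ite {ι : Type*} [DecidableEq ι] (E F : Finset ι) (hF : F ⊆ E) (p : ℝ) :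
    ∑ s ∈ E.powerset, (if s ∩ F = ∅ then p ^ s.card * (1-p) ^ (E.card - s.card) else 0)
      = (1-p) ^ F.card := by
  rw [← Finset.sum_filter]
  have hset : E.powerset.filter (fun s => s ∩ F = ∅) = (E \ F).powerset := by
    ext s
    simp only [Finset.mem_filter, Finset.mem_powerset, Finset.subset_sdiff]
    constructor
    · rintro ⟨h1, h2⟩; exact ⟨h1, Finset.disjoint_iff_inter_eq_empty.2 h2⟩
    · rintro ⟨h1, h2⟩; exact ⟨h1, Finset.disjoint_iff_inter_eq_empty.1 h2⟩
  rw [hset]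
  have hE : E.card = (E \ F).card + F.card := by
    rw [Finset.card_sdiff_of_subset hF]; have := Finset.card_le_card hF; omega
  have : ∀ s ∈ (E \ F).powerset,
      p ^ s.card * (1-p) ^ (E.card - s.card)
        = (1-p) ^ F.card * (p ^ s.card * (1-p) ^ ((E \ F).card - s.card)) := by
    intro s hs
    have hsc : s.card ≤ (E \ F).card := Finset.card_le_card (Finset.mem_powerset.1 hs)
    rw [hE]
    have : (E \ F).card + F.card - s.card = ((E \ F).card - s.card) + F.card := by omega
    rw [this, pow_add]
    ring
  rw [Finset.sum_congr rfl this, ← Finset.mul_sum, sum_powerset_weight]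
  norm_num

open Finset SimpleGraph Classical in
lemma erProb_noedge (n : ℕ) (p : ℝ) (U W : Finset (Fin n)) (hUW : Disjoint U W) :
    erProb n p {G | ∀ u ∈ U, ∀ w ∈ W, ¬ G.Adj u w} = (1 - p) ^ (U.card * W.card) := by
  set F : Finset (Sym2 (Fin n)) := (U ×ˢ W).image (fun x => s(x.1, x.2)) with hFdef
  have hne : ∀ u ∈ U, ∀ w ∈ W, u ≠ w := fun u hu w hw h =>
    Finset.disjoint_left.1 hUW hu (h ▸ hw)
  have hFsub : F ⊆ edgeSlots n := by
    intro e he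
    simp only [hFdef, Finset.mem_image, Finset.mem_product] at he
    obtain ⟨⟨u, w⟩, ⟨hu, hw⟩, rfl⟩ := he
    simp [edgeSlots, Sym2.isDiag_iff_proj_eq, hne u hu w hw]
  have hFcard : F.card = U.card * W.card := by
    rw [hFdef, Finset.card_image_of_injOn, Finset.card_product]
    rintro ⟨u, w⟩ huw ⟨u', w'⟩ huw' h
    simp only [Finset.mem_coe, Finset.mem_product] at huw huw'
    rw [Sym2.eq_iff] at h
    rcases h with ⟨h1, h2⟩ | ⟨h1, h2⟩
    · exact Prod.ext h1 h2
    · exact absurd h1 (hne _ huw.1 _ huw'.2)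
  rw [erProb_eq, ← hFcard, ← sum_powerset_ite (edgeSlots n) F hFsub p]
  refine Finset.sum_congr rfl fun s hs => ?_
  rw [edgeSlots_card]
  congr 1
  simp only [Set.mem_setOf_eq, eq_iff_iff]
  constructor
  · intro h
    by_contra hcon
    obtain ⟨e, he⟩ := Finset.nonempty_iff_ne_empty.2 hcon
    rw [Finset.mem_inter] at he
    have he2 := he.2
    simp only [hFdef, Finset.mem_image, Finset.mem_product] at he2
    obtain ⟨⟨u, w⟩, ⟨hu, hw⟩, rfl⟩ := he2
    exact h u hu w hw (by rw [SimpleGraph.fromEdgeSet_adj]; exact ⟨he.1, hne u hu w hw⟩)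
  · intro h u hu w hw hadj
    rw [SimpleGraph.fromEdgeSet_adj] at hadj
    have : s(u, w) ∈ s ∩ F := Finset.mem_inter.2 ⟨hadj.1, by
      simp only [hFdef, Finset.mem_image, Finset.mem_product]
      exact ⟨(u, w), ⟨hu, hw⟩, rfl⟩⟩
    rw [h] at this
    exact absurd this (Finset.notMem_empty _)

open Finset SimpleGraph Classical in
lemma erProb_nonneg (n : ℕ) (p : ℝ) (hp0 : 0 ≤ p) (hp1 : p ≤ 1)
    (A : Set (SimpleGraph (Fin n))) : 0 ≤ erProb n p A := by
  apply Finset.sum_nonneg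
  intro G _
  split
  · exact mul_nonneg (pow_nonneg hp0 _) (pow_nonneg (by linarith) _)
  · exact le_refl 0

open Finset SimpleGraph Classical in
lemma erProb_univ (n : ℕ) (p : ℝ) : erProb n p Set.univ = 1 := by
  rw [erProb_eq, ← edgeSlots_card n]
  simp only [Set.mem_univ, if_true]
  have h := sum_powerset_weight (edgeSlots n) p (1 - p)
  have h1 : p + (1 - p) = 1 := by ring
  rw [h1, one_pow] at h
  exact h

open Finset SimpleGraph Classical in
lemma erProb_compl (n : ℕ) (p : ℝ) (A : Set (SimpleGraph (Fin n))) :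
    erProb n p A = 1 - erProb n p {G | G ∉ A} := by
  have : erProb n p A + erProb n p {G | G ∉ A} = 1 := by
    rw [← erProb_univ n p, erProb, erProb, erProb, ← Finset.sum_add_distrib]
    refine Finset.sum_congr rfl fun G _ => ?_
    by_cases h : G ∈ A <;> simp [h]
  linarith

open Finset SimpleGraph Classical in
lemma erProb_union_bound {n : ℕ} {p : ℝ} (hp0 : 0 ≤ p) (hp1 : p ≤ 1)
    {ι : Type*} (I : Finset ι) (A : Set (SimpleGraph (Fin n)))
    (B : ι → Set (SimpleGraph (Fin n)))
    (h : ∀ G ∈ A, ∃ i ∈ I, G ∈ B i) :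
    erProb n p A ≤ ∑ i ∈ I, erProb n p (B i) := by
  have hterm : ∀ G : SimpleGraph (Fin n), 0 ≤
      p ^ G.edgeSet.ncard * (1 - p) ^ (n.choose 2 - G.edgeSet.ncard) :=
    fun G => mul_nonneg (pow_nonneg hp0 _) (pow_nonneg (by linarith) _)
  rw [erProb]
  simp only [erProb]
  rw [Finset.sum_comm]
  apply Finset.sum_le_sum
  intro G _
  by_cases hG : G ∈ A
  · obtain ⟨i, hi, hBi⟩ := h G hG
    rw [if_pos hG]
    calc p ^ G.edgeSet.ncard * (1 - p) ^ (n.choose 2 - G.edgeSet.ncard)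
        = (if G ∈ B i then p ^ G.edgeSet.ncard * (1 - p) ^ (n.choose 2 - G.edgeSet.ncard) else 0) := by
          rw [if_pos hBi]
      _ ≤ _ := Finset.single_le_sum (f := fun i => if G ∈ B i then p ^ G.edgeSet.ncard * (1 - p) ^ (n.choose 2 - G.edgeSet.ncard) else 0)
          (fun j _ => by split; exacts [hterm G, le_refl 0]) hi
  · rw [if_neg hG]
    exact Finset.sum_nonneg fun j _ => by split; exacts [hterm G, le_refl 0]

open Finset SimpleGraph Classical in
lemma erProb_bad_bound (n : ℕ) (p : ℝ) (hp0 : 0 ≤ p) (hp1 : p ≤ 1) :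
    erProb n p {G | ¬ (∀ U W : Set (Fin n), Disjoint U W →
        (n : ℝ) / Real.log (Real.log n) ≤ (U.ncard : ℝ) →
        (n : ℝ) / Real.log (Real.log n) ≤ (W.ncard : ℝ) →
        ∃ u ∈ U, ∃ w ∈ W, G.Adj u w)}
      ≤ 4 ^ n * (1 - p) ^ (⌈(n : ℝ) / Real.log (Real.log n)⌉₊ * ⌈(n : ℝ) / Real.log (Real.log n)⌉₊) := by
  set m : ℝ := (n : ℝ) / Real.log (Real.log n) with hm
  set k : ℕ := ⌈m⌉₊ with hk
  have h1p0 : (0:ℝ) ≤ 1 - p := by linarith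
  have h1p1 : (1:ℝ) - p ≤ 1 := by linarith
  set I : Finset (Finset (Fin n) × Finset (Fin n)) :=
    Finset.univ.filter (fun UW => Disjoint UW.1 UW.2 ∧ m ≤ (UW.1.card : ℝ) ∧ m ≤ (UW.2.card : ℝ))
    with hI
  have cover : ∀ G ∈ {G : SimpleGraph (Fin n) | ¬ (∀ U W : Set (Fin n), Disjoint U W →
      m ≤ (U.ncard : ℝ) → m ≤ (W.ncard : ℝ) → ∃ u ∈ U, ∃ w ∈ W, G.Adj u w)},
      ∃ UW ∈ I, G ∈ {G : SimpleGraph (Fin n) | ∀ u ∈ UW.1, ∀ w ∈ UW.2, ¬ G.Adj u w} := by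
    intro G hG
    simp only [Set.mem_setOf_eq] at hG
    push_neg at hG
    obtain ⟨U, W, hdisj, hU, hW, hno⟩ := hG
    refine ⟨(U.toFinite.toFinset, W.toFinite.toFinset), ?_, ?_⟩
    · simp only [hI, Finset.mem_filter, Finset.mem_univ, true_and]
      refine ⟨?_, ?_, ?_⟩
      · rw [Finset.disjoint_left]
        intro a ha hb
        rw [Set.Finite.mem_toFinset] at ha hb
        exact Set.disjoint_left.1 hdisj ha hb
      · rwa [← Set.ncard_eq_toFinset_card]
      · rwa [← Set.ncard_eq_toFinset_card]
    · intro u hu w hw hadj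
      rw [Set.Finite.mem_toFinset] at hu hw
      exact hno u hu w hw hadj
  calc erProb n p _ ≤ ∑ UW ∈ I, erProb n p {G : SimpleGraph (Fin n) | ∀ u ∈ UW.1, ∀ w ∈ UW.2, ¬ G.Adj u w} :=
      erProb_union_bound hp0 hp1 I _ _ cover
    _ ≤ ∑ UW ∈ I, (1 - p) ^ (k * k) := by
      apply Finset.sum_le_sum
      intro UW hUW
      simp only [hI, Finset.mem_filter, Finset.mem_univ, true_and] at hUW
      obtain ⟨hdisj, hU, hW⟩ := hUW
      rw [erProb_noedge n p UW.1 UW.2 hdisj]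
      apply pow_le_pow_of_le_one h1p0 h1p1
      exact Nat.mul_le_mul (Nat.ceil_le.2 (by exact_mod_cast hU)) (Nat.ceil_le.2 (by exact_mod_cast hW))
    _ = (I.card : ℝ) * (1 - p) ^ (k * k) := by rw [Finset.sum_const, nsmul_eq_mul]
    _ ≤ 4 ^ n * (1 - p) ^ (k * k) := by
      apply mul_le_mul_of_nonneg_right _ (pow_nonneg h1p0 _)
      have hcard : I.card ≤ 2 ^ n * 2 ^ n := by
        calc I.card ≤ Finset.univ.card := Finset.card_filter_le _ _
          _ = 2 ^ n * 2 ^ n := by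
            rw [Finset.card_univ, Fintype.card_prod, Fintype.card_finset, Fintype.card_fin]
      calc (I.card : ℝ) ≤ ((2 ^ n * 2 ^ n : ℕ) : ℝ) := by exact_mod_cast hcard
        _ = 4 ^ n := by push_cast; rw [← mul_pow]; norm_num


lemma tendsto_div_log_sq : Tendsto (fun x : ℝ => x / (Real.log x) ^ 2) atTop atTop := by
  have h0 : Tendsto (fun x : ℝ => (Real.log x) ^ 2 / x) atTop (nhds 0) := by
    have := Real.tendsto_pow_log_div_mul_add_atTop 1 0 2 one_ne_zero
    simpa using this
  have hpos : ∀ᶠ x : ℝ in atTop, 0 < (Real.log x) ^ 2 / x := by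
    filter_upwards [eventually_gt_atTop (1 : ℝ)] with x hx
    exact div_pos (pow_pos (Real.log_pos hx) 2) (by linarith)
  have h0' : Tendsto (fun x : ℝ => (Real.log x) ^ 2 / x) atTop (nhdsWithin 0 (Set.Ioi 0)) :=
    tendsto_nhdsWithin_of_tendsto_nhds_of_eventually_within _ h0 hpos
  have := h0'.inv_tendsto_nhdsGT_zero
  apply this.congr'
  filter_upwards [eventually_gt_atTop (1 : ℝ)] with x hx
  rw [Pi.inv_apply, inv_div]

lemma log_div_loglog_sq_tendsto :
    Tendsto (fun n : ℕ => Real.log n / (Real.log (Real.log n)) ^ 2) atTop atTop := by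
  exact tendsto_div_log_sq.comp (Real.tendsto_log_atTop.comp tendsto_natCast_atTop_atTop)

lemma p_tendsto_zero (α : ℕ → ℝ)
    (hαo : Tendsto (fun n : ℕ => α n / Real.log n) atTop (nhds 0)) :
    Tendsto (fun n : ℕ => (Real.log n + α n) / n) atTop (nhds 0) := by
  have T1 : Tendsto (fun n : ℕ => Real.log n / n) atTop (nhds 0) := by
    have := (Real.tendsto_pow_log_div_mul_add_atTop 1 0 1 one_ne_zero).comp
      (tendsto_natCast_atTop_atTop (R := ℝ))
    apply this.congr
    intro n
    simp [Function.comp]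
  have T2 : Tendsto (fun n : ℕ => α n / n) atTop (nhds 0) := by
    have := hαo.mul T1
    rw [mul_zero] at this
    apply this.congr'
    filter_upwards [eventually_gt_atTop 1] with n hn
    have hlog : Real.log n ≠ 0 := by
      have : (1:ℝ) < n := by exact_mod_cast hn
      exact ne_of_gt (Real.log_pos this)
    have hn0 : (n:ℝ) ≠ 0 := by positivity
    field_simp
  have := T1.add T2
  rw [add_zero] at this
  apply this.congr
  intro n
  rw [add_div]

lemma bound_tendsto_zero (α : ℕ → ℝ)
    (hα : Tendsto α atTop atTop)
    (hαo : Tendsto (fun n : ℕ => α n / Real.log n) atTop (nhds 0)) :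
    Tendsto (fun n : ℕ => (4:ℝ) ^ n * (1 - (Real.log n + α n) / n) ^
      (⌈(n : ℝ) / Real.log (Real.log n)⌉₊ * ⌈(n : ℝ) / Real.log (Real.log n)⌉₊))
      atTop (nhds 0) := by
  set p : ℕ → ℝ := fun n => (Real.log n + α n) / n with hp
  have hloglog : Tendsto (fun n : ℕ => Real.log (Real.log n)) atTop atTop :=
    Real.tendsto_log_atTop.comp (Real.tendsto_log_atTop.comp tendsto_natCast_atTop_atTop)
  have hlog : Tendsto (fun n : ℕ => Real.log n) atTop atTop :=
    Real.tendsto_log_atTop.comp tendsto_natCast_atTop_atTop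
  have hE : ∀ᶠ n : ℕ in atTop, 0 ≤ α n ∧ 1 ≤ Real.log n ∧ 1 ≤ Real.log (Real.log n) ∧
      p n ≤ 1 ∧ Real.log 4 + 1 ≤ Real.log n / (Real.log (Real.log n)) ^ 2 ∧ 1 ≤ n := by
    filter_upwards [hα.eventually_ge_atTop 0, hlog.eventually_ge_atTop 1,
      hloglog.eventually_ge_atTop 1,
      (p_tendsto_zero α hαo).eventually_le_const (by norm_num : (0:ℝ) < 1),
      log_div_loglog_sq_tendsto.eventually_ge_atTop (Real.log 4 + 1),
      eventually_ge_atTop 1] with n h1 h2 h3 h4 h5 h6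
    exact ⟨h1, h2, h3, h4, h5, h6⟩
  have key : ∀ n : ℕ, 0 ≤ α n → 1 ≤ Real.log n → 1 ≤ Real.log (Real.log n) →
      p n ≤ 1 → Real.log 4 + 1 ≤ Real.log n / (Real.log (Real.log n)) ^ 2 → 1 ≤ n →
      (4:ℝ) ^ n * (1 - p n) ^
        (⌈(n : ℝ) / Real.log (Real.log n)⌉₊ * ⌈(n : ℝ) / Real.log (Real.log n)⌉₊)
        ≤ Real.exp (-(n : ℝ)) := by
    intro n h1 h2 h3 h4 h5 h6
    set L : ℝ := Real.log (Real.log n) with hL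
    set k : ℕ := ⌈(n : ℝ) / L⌉₊ with hk
    have hn0 : (0:ℝ) < n := by exact_mod_cast Nat.lt_of_lt_of_le Nat.zero_lt_one h6
    have hL0 : (0:ℝ) < L := by linarith
    have hm0 : (0:ℝ) ≤ (n : ℝ) / L := div_nonneg hn0.le hL0.le
    have hkm : (n : ℝ) / L ≤ (k : ℝ) := Nat.le_ceil _
    have hp0 : 0 ≤ p n := div_nonneg (by linarith) hn0.le
    have h1p : 0 ≤ 1 - p n := by linarith
    have step1 : (1 - p n) ^ (k * k) ≤ Real.exp (-(p n)) ^ (k * k) := by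
      apply pow_le_pow_left₀ h1p
      have := Real.add_one_le_exp (-(p n))
      linarith
    have step2 : Real.exp (-(p n)) ^ (k * k) = Real.exp ((k * k : ℕ) * (-(p n))) := by
      rw [Real.exp_nat_mul]
    have step3 : (4:ℝ) ^ n = Real.exp (n * Real.log 4) := by
      rw [Real.exp_nat_mul, Real.exp_log (by norm_num : (0:ℝ) < 4)]
    have hpK : (n : ℝ) * (Real.log 4 + 1) ≤ ((k * k : ℕ) : ℝ) * p n := by
      have hKm : ((n : ℝ) / L) * ((n : ℝ) / L) ≤ ((k * k : ℕ) : ℝ) := by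
        push_cast
        exact mul_le_mul hkm hkm hm0 (le_trans hm0 hkm)
      have hplb : Real.log n / n ≤ p n := by
        show Real.log n / n ≤ (Real.log n + α n) / n
        gcongr
        linarith
      have hlogn0 : 0 ≤ Real.log n / n := div_nonneg (by linarith) hn0.le
      have hmul : ((n : ℝ) / L) * ((n : ℝ) / L) * (Real.log n / n) ≤ ((k * k : ℕ) : ℝ) * p n :=
        mul_le_mul hKm hplb hlogn0 (by positivity)
      have hid : ((n : ℝ) / L) * ((n : ℝ) / L) * (Real.log n / n) = n * (Real.log n / L ^ 2) := by
        field_simp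
      rw [hid] at hmul
      have : (n : ℝ) * (Real.log 4 + 1) ≤ n * (Real.log n / L ^ 2) :=
        mul_le_mul_of_nonneg_left h5 hn0.le
      linarith
    calc (4:ℝ) ^ n * (1 - p n) ^ (k * k)
        ≤ Real.exp (n * Real.log 4) * Real.exp ((k * k : ℕ) * (-(p n))) := by
          rw [← step3, ← step2]
          exact mul_le_mul_of_nonneg_left step1 (by positivity)
      _ = Real.exp (n * Real.log 4 + (k * k : ℕ) * (-(p n))) := by rw [← Real.exp_add]
      _ ≤ Real.exp (-(n : ℝ)) := by
          apply Real.exp_le_exp.2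
          have hexp : (n : ℝ) * (Real.log 4 + 1) = n * Real.log 4 + n := by ring
          nlinarith [hpK]
  have hexp0 : Tendsto (fun n : ℕ => Real.exp (-(n : ℝ))) atTop (nhds 0) := by
    apply Real.tendsto_exp_atBot.comp
    exact tendsto_neg_atBot_iff.2 tendsto_natCast_atTop_atTop
  apply squeeze_zero' _ _ hexp0
  · filter_upwards [hE] with n hn
    have h1p : 0 ≤ 1 - p n := by linarith [hn.2.2.2.1]
    positivity
  · filter_upwards [hE] with n hn
    exact key n hn.1 hn.2.1 hn.2.2.1 hn.2.2.2.1 hn.2.2.2.2.1 hn.2.2.2.2.2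

end Helpers


open Filter in
open Classical SimpleGraph in
lemma erProb_compl' (n : ℕ) (p : ℝ) (P : SimpleGraph (Fin n) → Prop) :
    erProb n p {G | P G} = 1 - erProb n p {G | ¬ P G} :=
  erProb_compl n p {G | P G}

/-- If `α n → +∞`, `α n = o(log n)`, and `p n = (log n + α n) / n`, then w.h.p. any two
disjoint vertex subsets `U, W` of `G(n, p n)`, each of size at least `n / log log n`, are
joined by at least one edge. -/
theorem er_large_sets_joined_whp (α : ℕ → ℝ)
    (hα : Filter.Tendsto α Filter.atTop Filter.atTop)
    (hαo : Filter.Tendsto (fun n : ℕ => α n / Real.log n) Filter.atTop (nhds 0)) :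
    Filter.Tendsto
      (fun n : ℕ => erProb n ((Real.log n + α n) / n)
        {G | ∀ U W : Set (Fin n), Disjoint U W →
          (n : ℝ) / Real.log (Real.log n) ≤ (U.ncard : ℝ) →
          (n : ℝ) / Real.log (Real.log n) ≤ (W.ncard : ℝ) →
          ∃ u ∈ U, ∃ w ∈ W, G.Adj u w})
      Filter.atTop (nhds 1) := by
  have hlog : Filter.Tendsto (fun n : ℕ => Real.log n) Filter.atTop Filter.atTop :=
    Real.tendsto_log_atTop.comp tendsto_natCast_atTop_atTop
  have hE : ∀ᶠ n : ℕ in Filter.atTop,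
      0 ≤ (Real.log n + α n) / n ∧ (Real.log n + α n) / n ≤ 1 := by
    filter_upwards [hα.eventually_ge_atTop 0, hlog.eventually_ge_atTop 0,
      (p_tendsto_zero α hαo).eventually_le_const (by norm_num : (0:ℝ) < 1)] with n h1 h2 h3
    exact ⟨div_nonneg (by linarith) (Nat.cast_nonneg n), h3⟩
  have hbad : Filter.Tendsto
      (fun n : ℕ => erProb n ((Real.log n + α n) / n)
        {G : SimpleGraph (Fin n) | ¬ (∀ U W : Set (Fin n), Disjoint U W →
          (n : ℝ) / Real.log (Real.log n) ≤ (U.ncard : ℝ) →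
          (n : ℝ) / Real.log (Real.log n) ≤ (W.ncard : ℝ) →
          ∃ u ∈ U, ∃ w ∈ W, G.Adj u w)})
      Filter.atTop (nhds 0) := by
    apply squeeze_zero' ?_ ?_ (bound_tendsto_zero α hα hαo)
    · filter_upwards [hE] with n hn
      exact erProb_nonneg n _ hn.1 hn.2 _
    · filter_upwards [hE] with n hn
      exact erProb_bad_bound n _ hn.1 hn.2
  have hconst : Filter.Tendsto (fun _ : ℕ => (1:ℝ)) Filter.atTop (nhds 1) :=
    tendsto_const_nhds
  have := hconst.sub hbad
  rw [sub_zero] at this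
  apply this.congr
  intro n
  exact (erProb_compl' n ((Real.log n + α n) / n)
    (fun G => ∀ U W : Set (Fin n), Disjoint U W →
      (n : ℝ) / Real.log (Real.log n) ≤ (U.ncard : ℝ) →
      (n : ℝ) / Real.log (Real.log n) ≤ (W.ncard : ℝ) →
      ∃ u ∈ U, ∃ w ∈ W, G.Adj u w)).symm
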